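/- arXiv:1507.08734 — 3 statements merged into one kernel-verified Lean document; each statement's English description precedes it below -/
import Mathlib

section
/- For a binary tree t on n ≥ 3 leaves, the Pauplin coefficients c_{xy}(t) = 2^{-l(x,y)}, where l(x,y) is the number of internal (degree-3) nodes on the path from leaf x to leaf y, satisfy: for every leaf x, the sum over all other leaves y of c_{xy}(t) equals 1. -/
/-- An unrooted binary phylogenetic tree with leaf set `Fin n`: a finite tree
whose leaves (degree-1 vertices) are exactly the images of the labels and whose
remaining (internal) vertices have degree 3. -/
structure PhyloTree (n : ℕ) where
  V : Type
  [instFintype : Fintype V]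
  [instDecEq : DecidableEq V]
  G : SimpleGraph V
  [instDecAdj : DecidableRel G.Adj]
  isTree : G.IsTree
  leaf : Fin n ↪ V
  degree_leaf : ∀ i, G.degree (leaf i) = 1
  degree_internal : ∀ v : V, (∀ i, leaf i ≠ v) → G.degree v = 3

attribute [instance] PhyloTree.instFintype PhyloTree.instDecEq PhyloTree.instDecAdj

/-- `l(x,y)`: the number of internal (non-leaf, i.e. degree-3) vertices on the
unique path between leaves `x` and `y`. -/
noncomputable def PhyloTree.internalCount {n : ℕ} (t : PhyloTree n) (x y : Fin n) : ℕ :=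
  ((t.isTree.existsUnique_path (t.leaf x) (t.leaf y)).choose.support.filter
    (fun v => ∀ i, t.leaf i ≠ v)).length


open SimpleGraph Walk Finset
set_option linter.unusedSectionVars false

namespace PauplinAux

variable {V : Type} [DecidableEq V] {G : SimpleGraph V}

/-- The canonical (unique) path between two vertices of a tree. -/
noncomputable def tpath (hT : G.IsTree) (u v : V) : G.Walk u v :=
  (hT.existsUnique_path u v).choose

lemma tpath_isPath (hT : G.IsTree) (u v : V) : (tpath hT u v).IsPath :=
  (hT.existsUnique_path u v).choose_spec.1

lemma tpath_eq (hT : G.IsTree) {u v : V} (p : G.Walk u v) (hp : p.IsPath) :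
    p = tpath hT u v :=
  (hT.existsUnique_path u v).choose_spec.2 p hp

lemma tpath_length (hT : G.IsTree) (u v : V) :
    (tpath hT u v).length = G.dist u v := by
  obtain ⟨p, hp, hlen⟩ := hT.isConnected.exists_path_of_dist u v
  rw [← tpath_eq hT p hp] at *
  exact hlen

lemma shortest_getVert (hc : G.Connected) {u v : V} (p : G.Walk u v)
    (hp : p.length = G.dist u v) :
    ∀ k, k ≤ p.length → G.dist u (p.getVert k) = k ∧ G.dist (p.getVert k) v = p.length - k := by
  induction p with
  | nil =>
      intro k hk
      have : k = 0 := by simpa using hk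
      subst this
      simp [SimpleGraph.dist_self]
  | @cons a b c h q ih =>
      intro k hk
      have hab : G.dist a b = 1 := SimpleGraph.dist_eq_one_iff_adj.mpr h
      have hq : q.length = G.dist b c := by
        have h1 : G.dist b c ≤ q.length := SimpleGraph.dist_le q
        have h2 : G.dist a c ≤ G.dist a b + G.dist b c := hc.dist_triangle
        simp only [Walk.length_cons] at hp
        omega
      match k with
      | 0 => simpa [SimpleGraph.dist_self] using hp.symm
      | k + 1 =>
          simp only [Walk.length_cons] at hk ⊢
          have hk' : k ≤ q.length := by omega
          obtain ⟨ih1, ih2⟩ := ih hq k hk'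
          rw [Walk.getVert_cons_succ]
          constructor
          · have hle : G.dist a (q.getVert k) ≤ k + 1 := by
              have := hc.dist_triangle (u := a) (v := b) (w := q.getVert k)
              omega
            have hge : k + 1 ≤ G.dist a (q.getVert k) := by
              have := hc.dist_triangle (u := a) (v := q.getVert k) (w := c)
              simp only [Walk.length_cons] at hp
              omega
            omega
          · omega

/-- In a tree, two adjacent vertices are at different distances from any root. -/
lemma adj_dist_ne (hT : G.IsTree) (r : V) {u v : V} (h : G.Adj u v) :
    G.dist r u ≠ G.dist r v := by
  intro heq
  obtain ⟨p, hp, hlen⟩ := hT.isConnected.exists_path_of_dist r u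
  obtain ⟨q, hq, hqlen⟩ := hT.isConnected.exists_path_of_dist r v
  have hvp : v ∉ p.support := by
    intro hv
    obtain ⟨k, hkv, hk⟩ := Walk.mem_support_iff_exists_getVert.mp hv
    have := (shortest_getVert hT.isConnected p hlen k hk).1
    rw [hkv] at this
    have hkeq : k = p.length := by omega
    subst hkeq
    rw [Walk.getVert_length] at hkv
    exact (h.ne hkv).elim
  have hcat : (p.concat h).IsPath := by
    rw [← Walk.isPath_reverse_iff, Walk.reverse_concat]
    exact hp.reverse.cons (by rw [Walk.support_reverse]; simpa using hvp)
  have : p.concat h = q := (tpath_eq hT _ hcat).trans (tpath_eq hT q hq).symm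
  have : (p.concat h).length = q.length := by rw [this]
  rw [Walk.length_concat] at this
  omega

lemma adj_dist (hT : G.IsTree) (r : V) {u v : V} (h : G.Adj u v) :
    G.dist r v = G.dist r u + 1 ∨ G.dist r u = G.dist r v + 1 := by
  have h1 : G.dist r v ≤ G.dist r u + 1 := by
    have := hT.isConnected.dist_triangle (u := r) (v := u) (w := v)
    have := SimpleGraph.dist_eq_one_iff_adj.mpr h
    omega
  have h2 : G.dist r u ≤ G.dist r v + 1 := by
    have := hT.isConnected.dist_triangle (u := r) (v := v) (w := u)
    have := SimpleGraph.dist_eq_one_iff_adj.mpr h.symm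
    omega
  have := adj_dist_ne hT r h
  omega

/-- Uniqueness of the parent: two neighbors of `w` one step closer to `r` coincide. -/
lemma parent_unique (hT : G.IsTree) (r : V) {w u u' : V} (h : G.Adj u w) (h' : G.Adj u' w)
    (hd : G.dist r u + 1 = G.dist r w) (hd' : G.dist r u' + 1 = G.dist r w) : u = u' := by
  have key : ∀ (z : V) (hz : G.Adj z w), G.dist r z + 1 = G.dist r w →
      z = (tpath hT r w).getVert (G.dist r w - 1) := by
    intro z hz hdz
    obtain ⟨p, hp, hlen⟩ := hT.isConnected.exists_path_of_dist r z
    have hwp : w ∉ p.support := by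
      intro hw
      obtain ⟨k, hkw, hk⟩ := Walk.mem_support_iff_exists_getVert.mp hw
      have := (shortest_getVert hT.isConnected p hlen k hk).1
      rw [hkw] at this
      omega
    have hcat : (p.concat hz).IsPath := by
      rw [← Walk.isPath_reverse_iff, Walk.reverse_concat]
      exact hp.reverse.cons (by rw [Walk.support_reverse]; simpa using hwp)
    have heq : p.concat hz = tpath hT r w := tpath_eq hT _ hcat
    have : (p.concat hz).getVert p.length = z := by
      rw [Walk.concat_eq_append, Walk.getVert_append]
      simp
    rw [heq] at this
    rw [← this, hlen]
    congr 1
    omega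
  rw [key u h hd, key u' h' hd']

lemma dist_lt_card [Fintype V] (hT : G.IsTree) (u v : V) :
    G.dist u v < Fintype.card V := by
  obtain ⟨p, hp, hlen⟩ := hT.isConnected.exists_path_of_dist u v
  have h1 : p.support.length ≤ Fintype.card V := hp.support_nodup.length_le_card
  rw [Walk.length_support] at h1
  omega

/-- An interior vertex of the canonical path has two distinct neighbors. -/
lemma interior_two_neighbors (hT : G.IsTree) {u v : V} {k : ℕ}
    (hk0 : 0 < k) (hk : k < (tpath hT u v).length) :
    ∃ a b, G.Adj ((tpath hT u v).getVert k) a ∧ G.Adj ((tpath hT u v).getVert k) b ∧ a ≠ b := by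
  set p := tpath hT u v with hpdef
  have hlen : p.length = G.dist u v := tpath_length hT u v
  refine ⟨p.getVert (k-1), p.getVert (k+1), ?_, ?_, ?_⟩
  · have := p.adj_getVert_succ (i := k - 1) (by omega)
    have hkk : k - 1 + 1 = k := by omega
    rw [hkk] at this
    exact this.symm
  · exact p.adj_getVert_succ hk
  · intro hab
    have h1 := (shortest_getVert hT.isConnected p hlen (k-1) (by omega)).1
    have h2 := (shortest_getVert hT.isConnected p hlen (k+1) (by omega)).1
    rw [hab] at h1
    omega

end PauplinAux
section Phylo

open SimpleGraph Walk Finset PauplinAux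

namespace PauplinAux

variable {n : ℕ}

/-- Labels of leaves whose path from the root leaf `x` passes through `v`. -/
noncomputable def Bset (t : PhyloTree n) (x : Fin n) (v : t.V) : Finset (Fin n) :=
  Finset.univ.filter (fun i => v ∈ (tpath t.isTree (t.leaf x) (t.leaf i)).support)

lemma not_leaf_of_two_neighbors (t : PhyloTree n) {v a b : t.V}
    (ha : t.G.Adj v a) (hb : t.G.Adj v b) (hab : a ≠ b) : ∀ i, t.leaf i ≠ v := by
  intro i hi
  have h2 : 1 < (t.G.neighborFinset v).card :=
    Finset.one_lt_card.mpr ⟨a, by rwa [SimpleGraph.mem_neighborFinset], b,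
      by rwa [SimpleGraph.mem_neighborFinset], hab⟩
  rw [SimpleGraph.card_neighborFinset_eq_degree, ← hi, t.degree_leaf i] at h2
  omega

lemma interior_not_leaf (t : PhyloTree n) {u w v : t.V}
    (hv : v ∈ (tpath t.isTree u w).support) (hvu : v ≠ u) (hvw : v ≠ w) :
    ∀ i, t.leaf i ≠ v := by
  obtain ⟨k, hgv, hk⟩ := Walk.mem_support_iff_exists_getVert.mp hv
  have hk0 : 0 < k := by
    rcases Nat.eq_zero_or_pos k with h | h
    · subst h; rw [Walk.getVert_zero] at hgv; exact absurd hgv.symm hvu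
    · exact h
  have hklt : k < (tpath t.isTree u w).length := by
    rcases lt_or_eq_of_le hk with h | h
    · exact h
    · subst h; rw [Walk.getVert_length] at hgv; exact absurd hgv.symm hvw
  obtain ⟨a, b, ha, hb, hab⟩ := interior_two_neighbors t.isTree hk0 hklt
  rw [hgv] at ha hb
  exact not_leaf_of_two_neighbors t ha hb hab

lemma main (t : PhyloTree n) (x : Fin n) :
    ∀ (k : ℕ) (v : t.V), v ≠ t.leaf x →
      Fintype.card t.V ≤ t.G.dist (t.leaf x) v + k →
      ∑ i ∈ Bset t x v, ((2:ℝ)⁻¹) ^ (t.G.dist (t.leaf x) (t.leaf i))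
        = (2:ℝ)⁻¹ ^ (t.G.dist (t.leaf x) v) := by
  intro k
  induction k with
  | zero =>
      intro v hv hcard
      exact absurd (dist_lt_card t.isTree (t.leaf x) v) (by omega)
  | succ k ih =>
      intro v hv hcard
      have hconn := t.isTree.isConnected
      set r := t.leaf x with hr
      set dv := t.G.dist r v with hdv
      have hdvpos : 0 < dv := hconn.pos_dist_of_ne (fun h => hv h.symm)
      by_cases hleaf : ∃ j, t.leaf j = v
      · obtain ⟨j, hj⟩ := hleaf
        have hBj : Bset t x v = {j} := by
          ext i
          simp only [Bset, Finset.mem_filter, Finset.mem_univ, true_and, Finset.mem_singleton]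
          constructor
          · intro hi
            by_cases hcase : v = t.leaf i
            · exact (t.leaf.injective (hj.trans hcase)).symm
            · exact absurd hj (fun h => interior_not_leaf t hi hv hcase j h)
          · rintro rfl
            rw [← hj]
            exact Walk.end_mem_support _
        rw [hBj, Finset.sum_singleton, hj]
      · push_neg at hleaf
        have hdeg : t.G.degree v = 3 := t.degree_internal v hleaf
        set p := tpath t.isTree r v with hp
        have hplen : p.length = dv := tpath_length t.isTree r v
        set p0 := p.getVert (dv - 1) with hp0
        have hadj0 : t.G.Adj p0 v := by
          have h1 := p.adj_getVert_succ (i := dv - 1) (by omega)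
          have h2 : dv - 1 + 1 = dv := by omega
          rw [h2] at h1
          have h3 : p.getVert dv = v := by rw [← hplen]; exact p.getVert_length
          rwa [h3] at h1
        have hd0 : t.G.dist r p0 = dv - 1 := by
          have := (shortest_getVert hconn p hplen (dv - 1) (by omega)).1
          rw [hp0]
          exact this
        set C := (t.G.neighborFinset v).erase p0 with hC
        have hCcard : C.card = 2 := by
          rw [hC, Finset.card_erase_of_mem
            (by rw [SimpleGraph.mem_neighborFinset]; exact hadj0.symm),
            SimpleGraph.card_neighborFinset_eq_degree, hdeg]
        have hCadj : ∀ c ∈ C, c ≠ p0 ∧ t.G.Adj v c := by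
          intro c hc
          rw [hC, Finset.mem_erase, SimpleGraph.mem_neighborFinset] at hc
          exact hc
        have hchild : ∀ c ∈ C, t.G.dist r c = dv + 1 := by
          intro c hc
          obtain ⟨hcne, hcadj⟩ := hCadj c hc
          rcases adj_dist t.isTree r hcadj with h | h
          · exact h
          · exact absurd (parent_unique t.isTree r hcadj.symm hadj0 (by omega) (by omega)) hcne
        have hBeq : Bset t x v = C.biUnion (fun c => Bset t x c) := by
          ext i
          simp only [Bset, Finset.mem_filter, Finset.mem_univ, true_and, Finset.mem_biUnion]
          constructor
          · intro hi
            set q := tpath t.isTree r (t.leaf i) with hq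
            have hqlen : q.length = t.G.dist r (t.leaf i) := tpath_length t.isTree r (t.leaf i)
            obtain ⟨k', hgv, hk'⟩ := Walk.mem_support_iff_exists_getVert.mp hi
            have hdk : k' = dv := by
              have := (shortest_getVert hconn q hqlen k' hk').1
              rw [hgv, ← hdv] at this
              omega
            have hklt : k' < q.length := by
              rcases lt_or_eq_of_le hk' with h | h
              · exact h
              · exfalso; rw [h, Walk.getVert_length] at hgv; exact hleaf i hgv
            refine ⟨q.getVert (k' + 1), ?_, ?_⟩
            · have hdist : t.G.dist r (q.getVert (k' + 1)) = k' + 1 :=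
                (shortest_getVert hconn q hqlen (k' + 1) (by omega)).1
              rw [hC, Finset.mem_erase, SimpleGraph.mem_neighborFinset]
              constructor
              · intro h; rw [h, hd0] at hdist; omega
              · have := q.adj_getVert_succ hklt
                rwa [hgv] at this
            · exact Walk.mem_support_iff_exists_getVert.mpr ⟨k' + 1, rfl, by omega⟩
          · rintro ⟨c, hcC, hi⟩
            have hdc := hchild c hcC
            set q := tpath t.isTree r (t.leaf i) with hq
            have hqlen : q.length = t.G.dist r (t.leaf i) := tpath_length t.isTree r (t.leaf i)
            obtain ⟨k', hgv, hk'⟩ := Walk.mem_support_iff_exists_getVert.mp hi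
            have hdk : k' = dv + 1 := by
              have := (shortest_getVert hconn q hqlen k' hk').1
              rw [hgv] at this
              omega
            have hprev : t.G.Adj (q.getVert (k' - 1)) c := by
              have h1 := q.adj_getVert_succ (i := k' - 1) (by omega)
              have h2 : k' - 1 + 1 = k' := by omega
              rwa [h2, hgv] at h1
            have hdprev : t.G.dist r (q.getVert (k' - 1)) = dv := by
              have := (shortest_getVert hconn q hqlen (k' - 1) (by omega)).1
              omega
            have hveq : q.getVert (k' - 1) = v :=
              parent_unique t.isTree r hprev (hCadj c hcC).2 (by omega) (by omega)
            exact Walk.mem_support_iff_exists_getVert.mpr ⟨k' - 1, hveq, by omega⟩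
        have hdisj : (C : Set t.V).PairwiseDisjoint (fun c => Bset t x c) := by
          intro c1 h1 c2 h2 hne
          simp only [Function.onFun]
          rw [Finset.disjoint_left]
          intro i hi1 hi2
          apply hne
          simp only [Bset, Finset.mem_filter, Finset.mem_univ, true_and] at hi1 hi2
          set q := tpath t.isTree r (t.leaf i) with hq
          have hqlen : q.length = t.G.dist r (t.leaf i) := tpath_length t.isTree r (t.leaf i)
          obtain ⟨k1, hg1, hk1⟩ := Walk.mem_support_iff_exists_getVert.mp hi1
          obtain ⟨k2, hg2, hk2⟩ := Walk.mem_support_iff_exists_getVert.mp hi2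
          have hd1 := (shortest_getVert hconn q hqlen k1 hk1).1
          have hd2 := (shortest_getVert hconn q hqlen k2 hk2).1
          rw [hg1] at hd1
          rw [hg2] at hd2
          have hc1 := hchild c1 (by exact_mod_cast h1)
          have hc2 := hchild c2 (by exact_mod_cast h2)
          have : k1 = k2 := by omega
          rw [← hg1, ← hg2, this]
        rw [hBeq, Finset.sum_biUnion hdisj]
        have hsums : ∀ c ∈ C, ∑ i ∈ Bset t x c, ((2:ℝ)⁻¹) ^ (t.G.dist r (t.leaf i))
            = (2:ℝ)⁻¹ ^ (dv + 1) := by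
          intro c hc
          have hdc := hchild c hc
          have hcr : c ≠ r := by
            intro h
            rw [h, SimpleGraph.dist_self] at hdc
            omega
          rw [ih c hcr (by omega), hdc]
        rw [Finset.sum_congr rfl hsums, Finset.sum_const, hCcard, nsmul_eq_mul, pow_succ]
        push_cast
        ring_nf

lemma internalCount_eq (t : PhyloTree n) (x y : Fin n) (hxy : y ≠ x) :
    t.internalCount x y = t.G.dist (t.leaf x) (t.leaf y) - 1 := by
  have hconn := t.isTree.isConnected
  have hne : t.leaf x ≠ t.leaf y := fun h => hxy (t.leaf.injective h.symm)
  set p := tpath t.isTree (t.leaf x) (t.leaf y) with hp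
  have hplen : p.length = t.G.dist (t.leaf x) (t.leaf y) :=
    tpath_length t.isTree (t.leaf x) (t.leaf y)
  have hdpos : 0 < t.G.dist (t.leaf x) (t.leaf y) := hconn.pos_dist_of_ne hne
  have hIC : t.internalCount x y
      = (p.support.filter (fun v => ∀ i, t.leaf i ≠ v)).length := rfl
  have hsplit := p.support.length_eq_length_filter_add
    (fun v => decide (∀ i, t.leaf i ≠ v))
  have hnodup : (p.support.filter
      (fun v => !decide (∀ i, t.leaf i ≠ v))).Nodup :=
    (tpath_isPath t.isTree (t.leaf x) (t.leaf y)).support_nodup.filter _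
  have htf : (p.support.filter (fun v => !decide (∀ i, t.leaf i ≠ v))).toFinset
      = {t.leaf x, t.leaf y} := by
    ext v
    simp only [List.mem_toFinset, List.mem_filter, Finset.mem_insert, Finset.mem_singleton,
      Bool.not_eq_true', decide_eq_false_iff_not, not_forall, not_not]
    constructor
    · rintro ⟨hv, i, hi⟩
      by_contra hcon
      push_neg at hcon
      exact interior_not_leaf t hv hcon.1 hcon.2 i hi
    · rintro (rfl | rfl)
      · exact ⟨Walk.start_mem_support _, ⟨x, rfl⟩⟩
      · exact ⟨Walk.end_mem_support _, ⟨y, rfl⟩⟩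
  have hlen2 : (p.support.filter (fun v => !decide (∀ i, t.leaf i ≠ v))).length = 2 := by
    rw [← List.toFinset_card_of_nodup hnodup, htf, Finset.card_insert_of_notMem (by simp only [Finset.mem_singleton]; exact hne),
      Finset.card_singleton]
  rw [hIC]
  have hsupp : p.support.length = t.G.dist (t.leaf x) (t.leaf y) + 1 := by
    rw [Walk.length_support, hplen]
  omega

end PauplinAux

end Phylo

open PauplinAux Finset SimpleGraph Walk in
/-- Pauplin's normalization: for every leaf `x` of a binary tree on `n ≥ 3` leaves,
the coefficients `c_{xy} = 2^{-l(x,y)}` sum to `1` over all other leaves `y`. -/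
theorem pauplin_coeff_sum_eq_one (n : ℕ) (hn : 3 ≤ n) (t : PhyloTree n) (x : Fin n) :
    ∑ y ∈ Finset.univ.filter (· ≠ x), ((2 : ℝ))⁻¹ ^ t.internalCount x y = 1 := by
  have hconn := t.isTree.isConnected
  set r := t.leaf x with hr
  obtain ⟨v0, hv0⟩ : ∃ a, t.G.neighborFinset r = {a} :=
    Finset.card_eq_one.mp (by rw [SimpleGraph.card_neighborFinset_eq_degree]; exact t.degree_leaf x)
  have hadj : t.G.Adj r v0 := by
    rw [← SimpleGraph.mem_neighborFinset, hv0]; exact Finset.mem_singleton_self v0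
  have hv0r : v0 ≠ r := hadj.ne'
  have hd1 : t.G.dist r v0 = 1 := SimpleGraph.dist_eq_one_iff_adj.mpr hadj
  have hB : Bset t x v0 = Finset.univ.filter (· ≠ x) := by
    ext i
    simp only [Bset, Finset.mem_filter, Finset.mem_univ, true_and]
    constructor
    · intro hi
      rintro rfl
      have hnil : tpath t.isTree r r = Walk.nil :=
        (tpath_eq t.isTree Walk.nil Walk.IsPath.nil).symm
      rw [hnil] at hi
      simp only [Walk.support_nil, List.mem_singleton] at hi
      exact hv0r hi
    · intro hix
      have hne : r ≠ t.leaf i := fun h => hix (t.leaf.injective h).symm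
      set q := tpath t.isTree r (t.leaf i) with hq
      have hqlen : q.length = t.G.dist r (t.leaf i) := tpath_length t.isTree r (t.leaf i)
      have hpos : 0 < q.length := by
        rw [hqlen]; exact hconn.pos_dist_of_ne hne
      have hadj1 : t.G.Adj r (q.getVert 1) := by
        have := q.adj_getVert_succ (i := 0) hpos
        simpa using this
      have hgv1 : q.getVert 1 = v0 := by
        have h1 : q.getVert 1 ∈ t.G.neighborFinset r := by
          rw [SimpleGraph.mem_neighborFinset]; exact hadj1
        rw [hv0] at h1
        simpa using h1
      exact Walk.mem_support_iff_exists_getVert.mpr ⟨1, hgv1, by omega⟩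
  have hmain := main t x (Fintype.card t.V) v0 hv0r (by omega)
  rw [hd1, pow_one, hB] at hmain
  have hsum : ∀ y ∈ Finset.univ.filter (· ≠ x),
      (2:ℝ)⁻¹ ^ (t.G.dist r (t.leaf y)) = (2:ℝ)⁻¹ * (2:ℝ)⁻¹ ^ (t.internalCount x y) := by
    intro y hy
    have hyx : y ≠ x := by simpa using hy
    rw [internalCount_eq t x y hyx]
    have hne : r ≠ t.leaf y := fun h => hyx (t.leaf.injective h).symm
    have hpos : 0 < t.G.dist r (t.leaf y) := hconn.pos_dist_of_ne hne
    have hstep : t.G.dist r (t.leaf y) = (t.G.dist r (t.leaf y) - 1) + 1 := by omega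
    conv_lhs => rw [hstep]
    rw [pow_succ]
    ring
  rw [Finset.sum_congr rfl hsum, ← Finset.mul_sum] at hmain
  have h2 : (2:ℝ)⁻¹ ≠ 0 := by norm_num
  have := mul_left_cancel₀ h2 (hmain.trans (mul_one _).symm)
  exact this
end

section
/- For n = 4 leaves, the matrix A^(4) (with diagonal entries 0 and entries −1 for distinct pairs sharing a leaf) applied to a tree metric d of the quartet tree 12|34 with interior edge length w > 0 yields a Q-criterion vector in which q_{12} = q_{34} < q_{xy} for all other pairs {x,y}, so NJ picks a correct cherry. -/
/-- For the quartet tree `12|34` (leaves `0,1,2,3` with cherries `{0,1}`, `{2,3}`,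
pendant lengths `e1,...,e4 ≥ 0`, interior length `w > 0`) the NJ Q-criterion
`q_{xy} = 2 d_{xy} - Σ_z d_{xz} - Σ_z d_{zy}` satisfies
`q_{12} = q_{34} < q_{xy}` for all other pairs, so NJ picks a correct cherry. -/
theorem nj_quartet_picks_cherry
    (e1 e2 e3 e4 w : ℝ) (he1 : 0 ≤ e1) (he2 : 0 ≤ e2) (he3 : 0 ≤ e3) (he4 : 0 ≤ e4)
    (hw : 0 < w)
    (d : Fin 4 → Fin 4 → ℝ) (hsymm : ∀ x y, d x y = d y x) (hdiag : ∀ x, d x x = 0)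
    (h01 : d 0 1 = e1 + e2) (h23 : d 2 3 = e3 + e4)
    (h02 : d 0 2 = e1 + e3 + w) (h13 : d 1 3 = e2 + e4 + w)
    (h03 : d 0 3 = e1 + e4 + w) (h12 : d 1 2 = e2 + e3 + w)
    (q : Fin 4 → Fin 4 → ℝ)
    (hq : ∀ x y, q x y = 2 * d x y - (∑ z, d x z) - ∑ z, d z y) :
    q 0 1 = q 2 3 ∧ q 0 1 < q 0 2 ∧ q 0 1 < q 0 3 ∧ q 0 1 < q 1 2 ∧ q 0 1 < q 1 3 := by
  have h10 := hsymm 0 1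
  have h32 := hsymm 2 3
  have h20 := hsymm 0 2
  have h31 := hsymm 1 3
  have h30 := hsymm 0 3
  have h21 := hsymm 1 2
  have d00 := hdiag 0; have d11 := hdiag 1; have d22 := hdiag 2; have d33 := hdiag 3
  simp only [hq, Fin.sum_univ_four]
  rw [← h10, ← h32, ← h31, ← h30, ← h21, ← h20] at *
  rw [h01, h23, h02, h13, h03, h12, d00, d11, d22, d33]
  refine ⟨by ring, by linarith, by linarith, by linarith, by linarith⟩
end

section
/- Shifting lemma invariance: for any leaf x ∈ [n] and any t ∈ ℝ, if d' is obtained from d by adding t to every distance d_{xy} for y ≠ x, then the Q-criterion vectors satisfy q'_{uv} − q_{uv} = −t for all pairs {u,v}; hence the differences q_{uv} − q_{u'v'} between any two Q-criterion entries are unchanged, and NJ picks the same minimal pair. -/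
/-- Shifting lemma invariance: if `d'` is obtained from a dissimilarity map `d`
on `[n]` by adding `t` to every distance `d_{xy}` with `y ≠ x` (for a fixed
leaf `x`), then every entry of the Q-criterion shifts by the same constant
(`-2t`); hence all differences of Q-criterion entries are unchanged and NJ
picks the same minimal pair. -/
theorem nj_shifting_lemma
    (n : ℕ) (hn : 4 ≤ n) (x : Fin n) (t : ℝ)
    (d d' : Fin n → Fin n → ℝ)
    (hsymm : ∀ u v, d u v = d v u) (hdiag : ∀ u, d u u = 0)
    (hsymm' : ∀ u v, d' u v = d' v u) (hdiag' : ∀ u, d' u u = 0)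
    (hshift : ∀ u v, u ≠ v → d' u v = d u v + (if x = u ∨ x = v then t else 0))
    (q q' : Fin n → Fin n → ℝ)
    (hq : ∀ u v, q u v = ((n : ℝ) - 2) * d u v - (∑ z, d u z) - ∑ z, d z v)
    (hq' : ∀ u v, q' u v = ((n : ℝ) - 2) * d' u v - (∑ z, d' u z) - ∑ z, d' z v) :
    (∀ u v, u ≠ v → q' u v - q u v = -(2 * t)) ∧
    (∀ u v u' v', u ≠ v → u' ≠ v' → q' u v - q' u' v' = q u v - q u' v') ∧
    (∀ u v, u ≠ v →
      ((∀ u' v', u' ≠ v' → q u v ≤ q u' v') ↔ (∀ u' v', u' ≠ v' → q' u v ≤ q' u' v'))) := by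

  -- row sum shift
  have hrow : ∀ u : Fin n, (∑ z, d' u z) = (∑ z, d u z) + (if x = u then ((n:ℝ)-1)*t else t) := by
    intro u
    have hterm : ∀ z : Fin n, d' u z = d u z + (if z = u then 0 else if x = u ∨ x = z then t else 0) := by
      intro z
      by_cases hz : z = u
      · simp [hz, hdiag, hdiag']
      · rw [hshift u z (Ne.symm hz)]
        simp [hz]
    rw [Finset.sum_congr rfl (fun z _ => hterm z), Finset.sum_add_distrib]
    congr 1
    by_cases hxu : x = u
    · simp only [hxu, true_or, if_pos]
      have : ∀ z : Fin n, (if z = u then (0:ℝ) else t) = t - (if z = u then t else 0) := by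
        intro z; by_cases hz : z = u <;> simp [hz]
      rw [Finset.sum_congr rfl (fun z _ => this z), Finset.sum_sub_distrib,
        Finset.sum_ite_eq' Finset.univ u (fun _ => t), Finset.sum_const]
      simp [hxu, Finset.card_univ, mul_comm]
      ring
    · have : ∀ z : Fin n, (if z = u then (0:ℝ) else if x = u ∨ x = z then t else 0)
          = (if z = x then t else 0) := by
        intro z
        by_cases hz : z = u
        · rw [if_pos hz, if_neg (fun h => hxu (h.symm.trans hz))]
        · rw [if_neg hz]
          by_cases hzx : z = x
          · rw [if_pos hzx, if_pos (Or.inr hzx.symm)]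
          · rw [if_neg hzx, if_neg]
            rintro (h | h)
            exacts [hxu h, hzx h.symm]
      rw [Finset.sum_congr rfl (fun z _ => this z),
        Finset.sum_ite_eq' Finset.univ x (fun _ => t)]
      simp [hxu]
  have hcol : ∀ v : Fin n, (∑ z, d' z v) = (∑ z, d z v) + (if x = v then ((n:ℝ)-1)*t else t) := by
    intro v
    have h1 : (∑ z, d' z v) = ∑ z, d' v z := by
      exact Finset.sum_congr rfl (fun z _ => hsymm' z v)
    have h2 : (∑ z, d z v) = ∑ z, d v z := by
      exact Finset.sum_congr rfl (fun z _ => hsymm z v)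
    rw [h1, h2, hrow]
  have main : ∀ u v : Fin n, u ≠ v → q' u v - q u v = -(2 * t) := by
    intro u v huv
    rw [hq, hq', hshift u v huv, hrow, hcol]
    by_cases hxu : x = u
    · rw [if_pos (Or.inl hxu), if_pos hxu, if_neg (fun h => huv (hxu.symm.trans h))]
      ring
    · by_cases hxv : x = v
      · rw [if_pos (Or.inr hxv), if_neg hxu, if_pos hxv]
        ring
      · rw [if_neg (by rintro (h | h); exacts [hxu h, hxv h]), if_neg hxu, if_neg hxv]
        ring
  refine ⟨main, ?_, ?_⟩
  · intro u v u' v' h h'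
    have h1 := main u v h
    have h2 := main u' v' h'
    linarith
  · intro u v huv
    constructor
    · intro H u' v' h'
      have := H u' v' h'
      have h1 := main u v huv
      have h2 := main u' v' h'
      linarith
    · intro H u' v' h'
      have := H u' v' h'
      have h1 := main u v huv
      have h2 := main u' v' h'
      linarith
end
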